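/- Let Z be the closure of the span of Dirac measures in (C^{1+α}(ℝ^d))*. The map T : Z* → C^{1+α}(ℝ^d) defined by (Tφ)(x) = φ(δ_x) is a linear isomorphism of Banach spaces; in particular T is injective, surjective, and ‖T^{-1}y‖_{Z*} ≤ ‖y‖_{C^{1+α}} for all y ∈ C^{1+α}(ℝ^d). -/

import Mathlib

open MeasureTheory Metric Filter
open scoped NNReal ENNReal BigOperators Topology

noncomputable section

/-- Euclidean space ℝ^d. -/
abbrev Ed (d : ℕ) : Type := EuclideanSpace ℝ (Fin d)

/-- The α-Hölder seminorm of the gradient map `g = fderiv ℝ f`. -/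
def holderSemi {d : ℕ} (α : ℝ) (g : Ed d → (Ed d →L[ℝ] ℝ)) : ℝ :=
  ⨆ x, ⨆ y, ‖g x - g y‖ / dist x y ^ α

/-- The C^{1+α} norm: sup|f| + sup|∇f| + α-Hölder seminorm of ∇f. -/
def c1aNorm {d : ℕ} (α : ℝ) (f : Ed d → ℝ) : ℝ :=
  (⨆ x, |f x|) + (⨆ x, ‖fderiv ℝ f x‖) + holderSemi α (fderiv ℝ f)

/-- Membership in C^{1+α}(ℝ^d): bounded C¹ function with bounded, α-Hölder gradient. -/
def MemC1a {d : ℕ} (α : ℝ) (f : Ed d → ℝ) : Prop :=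
  ContDiff ℝ 1 f ∧ BddAbove (Set.range fun x => |f x|) ∧
    BddAbove (Set.range fun x => ‖fderiv ℝ f x‖) ∧
    ∃ C : ℝ≥0, HolderWith C α.toNNReal (fderiv ℝ f)

/-- The dual norm on (C^{1+α}(ℝ^d))*, applied to a (not necessarily linear)
functional `L` on functions: sup of |L f| over ‖f‖_{C^{1+α}} ≤ 1. -/
def dualNorm {d : ℕ} (α : ℝ) (L : (Ed d → ℝ) → ℝ) : ℝ :=
  sSup {r | ∃ f, MemC1a α f ∧ c1aNorm α f ≤ 1 ∧ r = |L f|}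

/-- Functionals on test functions; the ambient space containing (C^{1+α}(ℝ^d))*. -/
abbrev W (d : ℕ) : Type := (Ed d → ℝ) → ℝ

/-- The Dirac functional δ_x : f ↦ f(x). -/
def diracW {d : ℕ} (x : Ed d) : W d := fun f => f x

/-- `z` is a bounded linear functional on C^{1+α}(ℝ^d). -/
def IsDualElt {d : ℕ} (α : ℝ) (z : W d) : Prop :=
  (∀ f g : Ed d → ℝ, z (f + g) = z f + z g) ∧
  (∀ (c : ℝ) (f : Ed d → ℝ), z (c • f) = c * z f) ∧
  ∃ M : ℝ, ∀ f, MemC1a α f → |z f| ≤ M * c1aNorm α f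

/-- Membership in Z, the closure of span{δ_x : x ∈ ℝ^d} in (C^{1+α}(ℝ^d))*. -/
def InZ {d : ℕ} (α : ℝ) (z : W d) : Prop :=
  IsDualElt α z ∧
  ∀ ε > (0 : ℝ), ∃ (n : ℕ) (c : Fin n → ℝ) (g : Fin n → Ed d),
    dualNorm α (fun f => z f - ∑ i, c i * f (g i)) ≤ ε

/-- `φ` is a bounded linear functional on Z (an element of Z*). -/
def BddOnZ {d : ℕ} (α : ℝ) (φ : W d →ₗ[ℝ] ℝ) : Prop :=
  ∃ M : ℝ, ∀ z : W d, InZ α z → |φ z| ≤ M * dualNorm α z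

/-- The operator norm of an element of Z*. -/
def zDualNorm {d : ℕ} (α : ℝ) (φ : W d →ₗ[ℝ] ℝ) : ℝ :=
  sSup {r | ∃ z : W d, InZ α z ∧ dualNorm α z ≤ 1 ∧ r = |φ z|}

section Aux
variable {d : ℕ} {α : ℝ}

lemma holderSemi_nonneg (g : Ed d → (Ed d →L[ℝ] ℝ)) : 0 ≤ holderSemi α g :=
  Real.iSup_nonneg fun x => Real.iSup_nonneg fun y =>
    div_nonneg (norm_nonneg _) (Real.rpow_nonneg dist_nonneg _)

lemma ratio_le (hα : 0 < α) {g : Ed d → (Ed d →L[ℝ] ℝ)} {C : ℝ≥0}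
    (hg : HolderWith C α.toNNReal g) (x y : Ed d) :
    ‖g x - g y‖ / dist x y ^ α ≤ C := by
  rcases eq_or_ne x y with rfl | hne
  · simp
  · have hd : 0 < dist x y := dist_pos.2 hne
    rw [div_le_iff₀ (Real.rpow_pos_of_pos hd α)]
    have h := hg.dist_le x y
    rw [Real.coe_toNNReal α hα.le] at h
    simpa [dist_eq_norm] using h

lemma holderSemi_le (hα : 0 < α) {g : Ed d → (Ed d →L[ℝ] ℝ)} {C : ℝ≥0}
    (hg : HolderWith C α.toNNReal g) : holderSemi α g ≤ C :=
  ciSup_le fun x => ciSup_le fun y => ratio_le hα hg x y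

lemma le_holderSemi (hα : 0 < α) {g : Ed d → (Ed d →L[ℝ] ℝ)} {C : ℝ≥0}
    (hg : HolderWith C α.toNNReal g) (x y : Ed d) :
    ‖g x - g y‖ / dist x y ^ α ≤ holderSemi α g := by
  have h1 : ‖g x - g y‖ / dist x y ^ α ≤ ⨆ y, ‖g x - g y‖ / dist x y ^ α :=
    le_ciSup ⟨(C : ℝ), Set.forall_mem_range.2 fun y => ratio_le hα hg x y⟩ y
  exact h1.trans (le_ciSup ⟨(C : ℝ), Set.forall_mem_range.2 fun x =>
    ciSup_le fun y => ratio_le hα hg x y⟩ x)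

lemma norm_sub_le_holderSemi (hα : 0 < α) {g : Ed d → (Ed d →L[ℝ] ℝ)} {C : ℝ≥0}
    (hg : HolderWith C α.toNNReal g) (x y : Ed d) :
    ‖g x - g y‖ ≤ holderSemi α g * dist x y ^ α := by
  rcases eq_or_ne x y with rfl | hne
  · have h0 : ‖g x - g x‖ = 0 := by simp
    rw [h0]
    exact mul_nonneg (holderSemi_nonneg g) (Real.rpow_nonneg dist_nonneg α)
  · have hd : 0 < dist x y ^ α := Real.rpow_pos_of_pos (dist_pos.2 hne) α
    have := le_holderSemi hα hg x y
    rwa [div_le_iff₀ hd] at this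

lemma c1a_term_nonneg (f : Ed d → ℝ) : (0:ℝ) ≤ ⨆ x, |f x| :=
  Real.iSup_nonneg fun x => abs_nonneg _

lemma c1a_term2_nonneg (f : Ed d → ℝ) : (0:ℝ) ≤ ⨆ x, ‖fderiv ℝ f x‖ :=
  Real.iSup_nonneg fun x => norm_nonneg _

lemma c1aNorm_nonneg (f : Ed d → ℝ) : 0 ≤ c1aNorm α f :=
  add_nonneg (add_nonneg (c1a_term_nonneg f) (c1a_term2_nonneg f)) (holderSemi_nonneg _)

lemma abs_le_c1aNorm {f : Ed d → ℝ} (hf : MemC1a α f) (x : Ed d) : |f x| ≤ c1aNorm α f := by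
  have h1 : |f x| ≤ ⨆ x, |f x| := le_ciSup hf.2.1 x
  have := add_nonneg (c1a_term2_nonneg f) (holderSemi_nonneg (d := d) (α := α) (fderiv ℝ f))
  unfold c1aNorm; linarith

lemma norm_fderiv_le_c1aNorm {f : Ed d → ℝ} (hf : MemC1a α f) (x : Ed d) :
    ‖fderiv ℝ f x‖ ≤ c1aNorm α f := by
  have h1 : ‖fderiv ℝ f x‖ ≤ ⨆ x, ‖fderiv ℝ f x‖ := le_ciSup hf.2.2.1 x
  have h2 := c1a_term_nonneg f
  have h3 := holderSemi_nonneg (d := d) (α := α) (fderiv ℝ f)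
  unfold c1aNorm; linarith

lemma holderSemi_le_c1aNorm {f : Ed d → ℝ} (hf : MemC1a α f) :
    holderSemi α (fderiv ℝ f) ≤ c1aNorm α f := by
  have h2 := c1a_term_nonneg f
  have h3 := c1a_term2_nonneg f
  unfold c1aNorm; linarith

lemma fderiv_sub_le {f : Ed d → ℝ} (hα : 0 < α) (hf : MemC1a α f) (x y : Ed d) :
    ‖fderiv ℝ f x - fderiv ℝ f y‖ ≤ c1aNorm α f * dist x y ^ α := by
  obtain ⟨C, hC⟩ := hf.2.2.2
  refine (norm_sub_le_holderSemi hα hC x y).trans ?_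
  exact mul_le_mul_of_nonneg_right (holderSemi_le_c1aNorm hf) (Real.rpow_nonneg dist_nonneg α)

end Aux
section Aux2
variable {d : ℕ} {α : ℝ}

lemma holderWith_of_dist {X Y : Type*} [PseudoMetricSpace X] [PseudoMetricSpace Y]
    (C r : ℝ≥0) (f : X → Y) (h : ∀ x y, dist (f x) (f y) ≤ C * dist x y ^ (r : ℝ)) :
    HolderWith C r f := by
  intro x y
  rw [edist_dist, edist_dist]
  calc ENNReal.ofReal (dist (f x) (f y)) ≤ ENNReal.ofReal (C * dist x y ^ (r : ℝ)) :=
        ENNReal.ofReal_le_ofReal (h x y)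
    _ = ENNReal.ofReal (C : ℝ) * ENNReal.ofReal (dist x y ^ (r : ℝ)) :=
        ENNReal.ofReal_mul C.coe_nonneg
    _ = (C : ℝ≥0∞) * ENNReal.ofReal (dist x y) ^ (r : ℝ) := by
        rw [ENNReal.ofReal_coe_nnreal, ← ENNReal.ofReal_rpow_of_nonneg dist_nonneg r.coe_nonneg]

lemma memC1a_zero : MemC1a α (0 : Ed d → ℝ) := by
  refine ⟨contDiff_const, ⟨0, ?_⟩, ⟨0, ?_⟩, 0, ?_⟩
  · rintro r ⟨x, rfl⟩; simp
  · rintro r ⟨x, rfl⟩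
    simp only [upperBounds, Pi.zero_def]
    rw [fderiv_const_apply]; simp
  · intro x y
    have h : ∀ a : Ed d, fderiv ℝ (0 : Ed d → ℝ) a = 0 := fun a => fderiv_const_apply 0
    rw [h x, h y]
    simp

lemma c1aNorm_zero (hα : 0 < α) : c1aNorm α (0 : Ed d → ℝ) = 0 := by
  have h1 : (⨆ x : Ed d, |(0 : Ed d → ℝ) x|) = 0 := by simp [ciSup_const]
  have h2 : (⨆ x : Ed d, ‖fderiv ℝ (0 : Ed d → ℝ) x‖) = 0 := by
    have : ∀ x : Ed d, fderiv ℝ (0 : Ed d → ℝ) x = 0 := fun x => fderiv_const_apply 0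
    simp [this, ciSup_const]
  have h3 : holderSemi α (fderiv ℝ (0 : Ed d → ℝ)) = 0 := by
    unfold holderSemi
    have : ∀ x : Ed d, fderiv ℝ (0 : Ed d → ℝ) x = 0 := fun x => fderiv_const_apply 0
    simp [this, ciSup_const]
  unfold c1aNorm; rw [h1, h2, h3]; ring

lemma isDualElt_zero_eval {z : W d} (hz : IsDualElt α z) : z 0 = 0 := by
  have := hz.2.1 0 0
  simpa using this

lemma dualNorm_bddAbove {z : W d} (hz : IsDualElt α z) :
    BddAbove {r | ∃ f, MemC1a α f ∧ c1aNorm α f ≤ 1 ∧ r = |z f|} := by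
  obtain ⟨M, hM⟩ := hz.2.2
  refine ⟨max M 0, ?_⟩
  rintro r ⟨f, hf, hf1, rfl⟩
  calc |z f| ≤ M * c1aNorm α f := hM f hf
    _ ≤ max M 0 * c1aNorm α f := mul_le_mul_of_nonneg_right (le_max_left _ _) (c1aNorm_nonneg f)
    _ ≤ max M 0 * 1 := mul_le_mul_of_nonneg_left hf1 (le_max_right _ _)
    _ = max M 0 := mul_one _

lemma le_dualNorm {z : W d} (hz : IsDualElt α z) {f : Ed d → ℝ}
    (hf : MemC1a α f) (hf1 : c1aNorm α f ≤ 1) : |z f| ≤ dualNorm α z :=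
  le_csSup (dualNorm_bddAbove hz) ⟨f, hf, hf1, rfl⟩

lemma dualNorm_nonneg (hα : 0 < α) {z : W d} (hz : IsDualElt α z) : 0 ≤ dualNorm α z := by
  have h := le_dualNorm hz memC1a_zero (by rw [c1aNorm_zero hα]; norm_num)
  rw [isDualElt_zero_eval hz] at h
  simpa using h

lemma dualNorm_le {L : (Ed d → ℝ) → ℝ} {B : ℝ} (hB : 0 ≤ B)
    (h : ∀ f, MemC1a α f → c1aNorm α f ≤ 1 → |L f| ≤ B) : dualNorm α L ≤ B := by
  apply Real.sSup_le _ hB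
  rintro r ⟨f, hf, hf1, rfl⟩
  exact h f hf hf1

lemma memC1a_smul {f : Ed d → ℝ} (hf : MemC1a α f) (e : ℝ) :
    MemC1a α (e • f) := by
  obtain ⟨hcd, ⟨B1, hB1⟩, ⟨B2, hB2⟩, C, hC⟩ := hf
  have hdiff : Differentiable ℝ f := hcd.differentiable one_ne_zero
  have hfd : ∀ x, fderiv ℝ (e • f) x = e • fderiv ℝ f x := by
    intro x
    exact fderiv_const_smul (hdiff x) e
  refine ⟨hcd.const_smul e, ⟨|e| * B1, ?_⟩, ⟨|e| * B2, ?_⟩, |e|.toNNReal * C, ?_⟩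
  · rintro r ⟨x, rfl⟩
    show |(e • f) x| ≤ |e| * B1
    rw [Pi.smul_apply, smul_eq_mul, abs_mul]
    exact mul_le_mul_of_nonneg_left (hB1 ⟨x, rfl⟩) (abs_nonneg e)
  · rintro r ⟨x, rfl⟩
    show ‖fderiv ℝ (e • f) x‖ ≤ |e| * B2
    rw [hfd x, norm_smul, Real.norm_eq_abs]
    exact mul_le_mul_of_nonneg_left (hB2 ⟨x, rfl⟩) (abs_nonneg e)
  · apply holderWith_of_dist
    intro x y
    rw [hfd x, hfd y, dist_eq_norm, ← smul_sub, norm_smul, Real.norm_eq_abs]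
    push_cast
    rw [Real.coe_toNNReal _ (abs_nonneg e)]
    have h1 : ‖fderiv ℝ f x - fderiv ℝ f y‖ ≤ C * dist x y ^ ((α.toNNReal : ℝ)) := by
      have := hC.dist_le x y
      rwa [dist_eq_norm] at this
    calc |e| * ‖fderiv ℝ f x - fderiv ℝ f y‖ ≤ |e| * (C * dist x y ^ ((α.toNNReal : ℝ))) :=
          mul_le_mul_of_nonneg_left h1 (abs_nonneg e)
      _ = |e| * C * dist x y ^ ((α.toNNReal : ℝ)) := by ring

lemma c1aNorm_smul_le (hα : 0 < α) {f : Ed d → ℝ} (hf : MemC1a α f) (e : ℝ) :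
    c1aNorm α (e • f) ≤ |e| * c1aNorm α f := by
  have hdiff : Differentiable ℝ f := hf.1.differentiable one_ne_zero
  have hfd : ∀ x, fderiv ℝ (e • f) x = e • fderiv ℝ f x := fun x =>
    fderiv_const_smul (hdiff x) e
  obtain ⟨C, hC⟩ := hf.2.2.2
  have t1 : (⨆ x, |(e • f) x|) ≤ |e| * ⨆ x, |f x| := by
    apply ciSup_le
    intro x
    rw [Pi.smul_apply, smul_eq_mul, abs_mul]
    exact mul_le_mul_of_nonneg_left (le_ciSup hf.2.1 x) (abs_nonneg e)
  have t2 : (⨆ x, ‖fderiv ℝ (e • f) x‖) ≤ |e| * ⨆ x, ‖fderiv ℝ f x‖ := by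
    apply ciSup_le
    intro x
    rw [hfd x, norm_smul, Real.norm_eq_abs]
    exact mul_le_mul_of_nonneg_left (le_ciSup hf.2.2.1 x) (abs_nonneg e)
  have t3 : holderSemi α (fderiv ℝ (e • f)) ≤ |e| * holderSemi α (fderiv ℝ f) := by
    apply ciSup_le
    intro x
    apply ciSup_le
    intro y
    rw [hfd x, hfd y, show e • fderiv ℝ f x - e • fderiv ℝ f y = e • (fderiv ℝ f x - fderiv ℝ f y) from (smul_sub e _ _).symm, norm_smul, Real.norm_eq_abs, mul_div_assoc]
    exact mul_le_mul_of_nonneg_left (le_holderSemi hα hC x y) (abs_nonneg e)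
  unfold c1aNorm
  calc _ ≤ (|e| * ⨆ x, |f x|) + (|e| * ⨆ x, ‖fderiv ℝ f x‖) +
        (|e| * holderSemi α (fderiv ℝ f)) := by
        exact add_le_add (add_le_add t1 t2) t3
    _ = |e| * c1aNorm α f := by unfold c1aNorm; ring

lemma abs_le_mul_dualNorm (hα : 0 < α) {z : W d} (hz : IsDualElt α z)
    {f : Ed d → ℝ} (hf : MemC1a α f) : |z f| ≤ dualNorm α z * c1aNorm α f := by
  rcases eq_or_lt_of_le (c1aNorm_nonneg (α := α) f) with h0 | hpos
  · -- c1aNorm = 0 : f = 0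
    have hf0 : f = 0 := by
      funext x
      have h1 : |f x| ≤ 0 := by rw [h0]; exact abs_le_c1aNorm hf x
      simpa using le_antisymm h1 (abs_nonneg _)
    rw [hf0, isDualElt_zero_eval hz, c1aNorm_zero hα, mul_zero]
    simp
  · set N := c1aNorm α f with hN
    set f' := N⁻¹ • f with hf'
    have hmem : MemC1a α f' := memC1a_smul hf N⁻¹
    have hle : c1aNorm α f' ≤ 1 := by
      calc c1aNorm α f' ≤ |N⁻¹| * N := c1aNorm_smul_le hα hf N⁻¹
        _ = 1 := by rw [abs_of_pos (inv_pos.2 hpos)]; field_simp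
    have key : |z f'| ≤ dualNorm α z := le_dualNorm hz hmem hle
    have hzf : z f = N * z f' := by
      have : N • f' = f := by
        rw [hf', smul_smul, mul_inv_cancel₀ (ne_of_gt hpos), one_smul]
      rw [← this, hz.2.1 N f']
    rw [hzf, abs_mul, abs_of_pos hpos, mul_comm (dualNorm α z) N]
    exact mul_le_mul_of_nonneg_left key hpos.le

end Aux2
section Aux3
variable {d : ℕ} {α : ℝ}

/-- Finite linear combination of Diracs, as a raw functional. -/
def Sfin {d : ℕ} {n : ℕ} (c : Fin n → ℝ) (g : Fin n → Ed d) : W d :=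
  fun f => ∑ i, c i * f (g i)

lemma isDualElt_sfin {n : ℕ} (c : Fin n → ℝ) (g : Fin n → Ed d) :
    IsDualElt α (Sfin c g) := by
  refine ⟨fun f h => ?_, fun e f => ?_, ∑ i, |c i|, fun f hf => ?_⟩
  · unfold Sfin
    rw [← Finset.sum_add_distrib]
    exact Finset.sum_congr rfl fun i _ => by simp [Pi.add_apply]; ring
  · unfold Sfin
    rw [Finset.mul_sum]
    exact Finset.sum_congr rfl fun i _ => by simp [Pi.smul_apply, smul_eq_mul]; ring
  · unfold Sfin
    calc |∑ i, c i * f (g i)| ≤ ∑ i, |c i * f (g i)| := Finset.abs_sum_le_sum_abs _ _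
      _ ≤ ∑ i, |c i| * c1aNorm α f := by
          apply Finset.sum_le_sum
          intro i _
          rw [abs_mul]
          exact mul_le_mul_of_nonneg_left (abs_le_c1aNorm hf (g i)) (abs_nonneg _)
      _ = (∑ i, |c i|) * c1aNorm α f := (Finset.sum_mul _ _ _).symm

lemma isDualElt_sub {z₁ z₂ : W d} (h₁ : IsDualElt α z₁) (h₂ : IsDualElt α z₂) :
    IsDualElt α (fun f => z₁ f - z₂ f) := by
  obtain ⟨a₁, s₁, M₁, hM₁⟩ := h₁
  obtain ⟨a₂, s₂, M₂, hM₂⟩ := h₂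
  refine ⟨fun f g => ?_, fun e f => ?_, M₁ + M₂, fun f hf => ?_⟩
  · show z₁ (f + g) - z₂ (f + g) = (z₁ f - z₂ f) + (z₁ g - z₂ g)
    rw [a₁, a₂]; ring
  · show z₁ (e • f) - z₂ (e • f) = e * (z₁ f - z₂ f)
    rw [s₁, s₂]; ring
  calc |z₁ f - z₂ f| ≤ |z₁ f| + |z₂ f| := abs_sub _ _
    _ ≤ M₁ * c1aNorm α f + M₂ * c1aNorm α f := add_le_add (hM₁ f hf) (hM₂ f hf)
    _ = (M₁ + M₂) * c1aNorm α f := by ring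

lemma inZ_sfin (hα : 0 < α) {n : ℕ} (c : Fin n → ℝ) (g : Fin n → Ed d) :
    InZ α (Sfin c g) := by
  refine ⟨isDualElt_sfin c g, fun ε hε => ⟨n, c, g, ?_⟩⟩
  apply dualNorm_le hε.le
  intro f hf hf1
  have : Sfin c g f - ∑ i, c i * f (g i) = 0 := sub_self _
  rw [this]
  simpa using hε.le

lemma inZ_sub (hα : 0 < α) {z₁ z₂ : W d} (h₁ : InZ α z₁) (h₂ : InZ α z₂) :
    InZ α (fun f => z₁ f - z₂ f) := by
  refine ⟨isDualElt_sub h₁.1 h₂.1, fun ε hε => ?_⟩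
  obtain ⟨n₁, c₁, g₁, hap₁⟩ := h₁.2 (ε / 2) (by linarith)
  obtain ⟨n₂, c₂, g₂, hap₂⟩ := h₂.2 (ε / 2) (by linarith)
  refine ⟨n₁ + n₂, Fin.append c₁ (fun i => -c₂ i), Fin.append g₁ g₂, ?_⟩
  apply dualNorm_le hε.le
  intro f hf hf1
  have hsum : ∑ i : Fin (n₁ + n₂), Fin.append c₁ (fun i => -c₂ i) i * f (Fin.append g₁ g₂ i)
      = (∑ i, c₁ i * f (g₁ i)) - ∑ i, c₂ i * f (g₂ i) := by
    rw [Fin.sum_univ_add]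
    simp only [Fin.append_left, Fin.append_right]
    rw [sub_eq_add_neg, ← Finset.sum_neg_distrib]
    congr 1
    exact Finset.sum_congr rfl fun i _ => by ring
  rw [hsum]
  have hw₁ : IsDualElt α (fun f => z₁ f - ∑ i, c₁ i * f (g₁ i)) :=
    isDualElt_sub h₁.1 (isDualElt_sfin c₁ g₁)
  have hw₂ : IsDualElt α (fun f => z₂ f - ∑ i, c₂ i * f (g₂ i)) :=
    isDualElt_sub h₂.1 (isDualElt_sfin c₂ g₂)
  have e1 : |z₁ f - ∑ i, c₁ i * f (g₁ i)| ≤ ε / 2 := le_trans (le_dualNorm hw₁ hf hf1) hap₁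
  have e2 : |z₂ f - ∑ i, c₂ i * f (g₂ i)| ≤ ε / 2 := le_trans (le_dualNorm hw₂ hf hf1) hap₂
  calc |z₁ f - z₂ f - ((∑ i, c₁ i * f (g₁ i)) - ∑ i, c₂ i * f (g₂ i))|
      = |(z₁ f - ∑ i, c₁ i * f (g₁ i)) - (z₂ f - ∑ i, c₂ i * f (g₂ i))| := by ring_nf
    _ ≤ |z₁ f - ∑ i, c₁ i * f (g₁ i)| + |z₂ f - ∑ i, c₂ i * f (g₂ i)| := abs_sub _ _
    _ ≤ ε / 2 + ε / 2 := add_le_add e1 e2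
    _ = ε := by ring

lemma isDualElt_dirac (x : Ed d) : IsDualElt α (diracW x) := by
  refine ⟨fun f g => rfl, fun e f => rfl, 1, fun f hf => ?_⟩
  rw [one_mul]
  exact abs_le_c1aNorm hf x

lemma inZ_dirac (hα : 0 < α) (x : Ed d) : InZ α (diracW x) := by
  refine ⟨isDualElt_dirac x, fun ε hε => ⟨1, fun _ => 1, fun _ => x, ?_⟩⟩
  apply dualNorm_le hε.le
  intro f hf hf1
  simp [diracW]
  exact hε.le

lemma dualNorm_dirac_le (hα : 0 < α) (x : Ed d) : dualNorm α (diracW x) ≤ 1 := by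
  apply dualNorm_le zero_le_one
  intro f hf hf1
  exact (abs_le_c1aNorm hf x).trans hf1

/-- Mean value / Taylor estimate for C^{1,α} functions. -/
lemma mvt (hα : 0 < α) {f : Ed d → ℝ} (hf : MemC1a α f) {H : ℝ} (hH : 0 ≤ H)
    (hHd : ∀ a b : Ed d, ‖fderiv ℝ f a - fderiv ℝ f b‖ ≤ H * dist a b ^ α)
    (x y : Ed d) :
    |f y - f x - fderiv ℝ f x (y - x)| ≤ H * ‖y - x‖ ^ α * ‖y - x‖ := by
  have hdiff : Differentiable ℝ f := hf.1.differentiable one_ne_zero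
  have hseg : ∀ z ∈ segment ℝ x y, dist z x ≤ ‖y - x‖ := by
    rintro z ⟨a, b, ha, hb, hab, rfl⟩
    rw [dist_eq_norm]
    have h' : a = 1 - b := by linarith
    have : a • x + b • y - x = b • (y - x) := by
      rw [h']; module
    rw [this, norm_smul, Real.norm_eq_abs, abs_of_nonneg hb]
    nlinarith [norm_nonneg (y - x)]
  have key := Convex.norm_image_sub_le_of_norm_hasFDerivWithin_le'
    (f := f) (f' := fderiv ℝ f) (φ := fderiv ℝ f x) (C := H * ‖y - x‖ ^ α)
    (s := segment ℝ x y)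
    (fun z _ => (hdiff z).hasFDerivAt.hasFDerivWithinAt)
    (fun z hz => by
      calc ‖fderiv ℝ f z - fderiv ℝ f x‖ ≤ H * dist z x ^ α := hHd z x
        _ ≤ H * ‖y - x‖ ^ α := by
            apply mul_le_mul_of_nonneg_left _ hH
            exact Real.rpow_le_rpow dist_nonneg (hseg z hz) hα.le)
    (convex_segment x y) (left_mem_segment ℝ x y) (right_mem_segment ℝ x y)
  rw [← Real.norm_eq_abs]
  exact key

end Aux3
section Aux4
variable {d : ℕ} {α : ℝ}

lemma memC1a_add {f g : Ed d → ℝ} (hf : MemC1a α f) (hg : MemC1a α g) :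
    MemC1a α (f + g) := by
  obtain ⟨hcf, ⟨B1, hB1⟩, ⟨B2, hB2⟩, C, hC⟩ := hf
  obtain ⟨hcg, ⟨B1', hB1'⟩, ⟨B2', hB2'⟩, C', hC'⟩ := hg
  have hdf : Differentiable ℝ f := hcf.differentiable one_ne_zero
  have hdg : Differentiable ℝ g := hcg.differentiable one_ne_zero
  have hfd : ∀ x, fderiv ℝ (f + g) x = fderiv ℝ f x + fderiv ℝ g x := fun x =>
    fderiv_add (hdf x) (hdg x)
  refine ⟨hcf.add hcg, ⟨B1 + B1', ?_⟩, ⟨B2 + B2', ?_⟩, C + C', ?_⟩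
  · rintro r ⟨x, rfl⟩
    exact (abs_add_le _ _).trans (add_le_add (hB1 ⟨x, rfl⟩) (hB1' ⟨x, rfl⟩))
  · rintro r ⟨x, rfl⟩
    show ‖fderiv ℝ (f + g) x‖ ≤ B2 + B2'
    rw [hfd x]
    exact (norm_add_le _ _).trans (add_le_add (hB2 ⟨x, rfl⟩) (hB2' ⟨x, rfl⟩))
  · apply holderWith_of_dist
    intro x y
    rw [hfd x, hfd y, dist_eq_norm]
    have h1 := hC.dist_le x y
    have h2 := hC'.dist_le x y
    rw [dist_eq_norm] at h1 h2
    push_cast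
    calc ‖fderiv ℝ f x + fderiv ℝ g x - (fderiv ℝ f y + fderiv ℝ g y)‖
        = ‖(fderiv ℝ f x - fderiv ℝ f y) + (fderiv ℝ g x - fderiv ℝ g y)‖ := by congr 1; abel
      _ ≤ ‖fderiv ℝ f x - fderiv ℝ f y‖ + ‖fderiv ℝ g x - fderiv ℝ g y‖ := norm_add_le _ _
      _ ≤ C * dist x y ^ ((α.toNNReal : ℝ)) + C' * dist x y ^ ((α.toNNReal : ℝ)) :=
          add_le_add h1 h2
      _ = (C + C') * dist x y ^ ((α.toNNReal : ℝ)) := by ring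

/-- The subspace of C^{1+α} functions. -/
def VC (d : ℕ) (α : ℝ) : Submodule ℝ (Ed d → ℝ) where
  carrier := {f | MemC1a α f}
  add_mem' := memC1a_add
  zero_mem' := memC1a_zero
  smul_mem' := fun c f hf => memC1a_smul hf c

lemma mem_VC {f : Ed d → ℝ} : f ∈ VC d α ↔ MemC1a α f := Iff.rfl

/-- A linear projection from all functions onto C^{1+α}, identity on C^{1+α}. -/
def Pc (d : ℕ) (α : ℝ) : (Ed d → ℝ) →ₗ[ℝ] (Ed d → ℝ) :=
  (VC d α).subtype ∘ₗ
    Submodule.linearProjOfIsCompl _ _ (Submodule.exists_isCompl (VC d α)).choose_spec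

lemma Pc_mem (f : Ed d → ℝ) : MemC1a α (Pc d α f) :=
  mem_VC.mp (Submodule.linearProjOfIsCompl _ _ (Submodule.exists_isCompl (VC d α)).choose_spec f).2

lemma Pc_eq {f : Ed d → ℝ} (hf : MemC1a α f) : Pc d α f = f :=
  congrArg Subtype.val
    (Submodule.linearProjOfIsCompl_apply_left
      (Submodule.exists_isCompl (VC d α)).choose_spec (⟨f, mem_VC.mpr hf⟩ : VC d α))

/-- The "directional-derivative at x in direction v" functional, linearized via `Pc`. -/
def Dz (d : ℕ) (α : ℝ) (x v : Ed d) : W d := fun f => fderiv ℝ (Pc d α f) x v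

lemma Dz_eq {f : Ed d → ℝ} (hf : MemC1a α f) (x v : Ed d) :
    Dz d α x v f = fderiv ℝ f x v := by
  unfold Dz; rw [Pc_eq hf]

lemma isDualElt_Dz (x v : Ed d) : IsDualElt α (Dz d α x v) := by
  refine ⟨fun f g => ?_, fun c f => ?_, ‖v‖, fun f hf => ?_⟩
  · unfold Dz
    rw [map_add]
    have h1 : Differentiable ℝ (Pc d α f) := (Pc_mem f).1.differentiable one_ne_zero
    have h2 : Differentiable ℝ (Pc d α g) := (Pc_mem g).1.differentiable one_ne_zero
    rw [fderiv_add (h1 x) (h2 x)]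
    simp
  · unfold Dz
    rw [_root_.map_smul]
    have h1 : Differentiable ℝ (Pc d α f) := (Pc_mem f).1.differentiable one_ne_zero
    rw [fderiv_const_smul (h1 x) c]
    simp
  · rw [Dz_eq hf]
    calc |fderiv ℝ f x v| ≤ ‖fderiv ℝ f x‖ * ‖v‖ := (fderiv ℝ f x).le_opNorm v
      _ ≤ c1aNorm α f * ‖v‖ :=
          mul_le_mul_of_nonneg_right (norm_fderiv_le_c1aNorm hf x) (norm_nonneg v)
      _ = ‖v‖ * c1aNorm α f := by ring

lemma dualNorm_Dz_le (hα : 0 < α) (x v : Ed d) : dualNorm α (Dz d α x v) ≤ ‖v‖ := by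
  apply dualNorm_le (norm_nonneg v)
  intro f hf hf1
  rw [Dz_eq hf]
  calc |fderiv ℝ f x v| ≤ ‖fderiv ℝ f x‖ * ‖v‖ := (fderiv ℝ f x).le_opNorm v
    _ ≤ 1 * ‖v‖ := mul_le_mul_of_nonneg_right
        ((norm_fderiv_le_c1aNorm hf x).trans hf1) (norm_nonneg v)
    _ = ‖v‖ := one_mul _

lemma inZ_Dz (hα : 0 < α) (x v : Ed d) : InZ α (Dz d α x v) := by
  refine ⟨isDualElt_Dz x v, fun ε hε => ?_⟩
  -- choose t > 0 small
  set X : ℝ := (ε / (‖v‖ + 1)) ^ α⁻¹ with hX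
  have hv1 : (0:ℝ) < ‖v‖ + 1 := by positivity
  have hXpos : 0 < X := Real.rpow_pos_of_pos (by positivity) _
  set t : ℝ := (‖v‖ + 1)⁻¹ * X with ht
  have htpos : 0 < t := by positivity
  refine ⟨2, ![t⁻¹, -t⁻¹], ![x + t • v, x], ?_⟩
  apply dualNorm_le hε.le
  intro f hf hf1
  have hsum : ∑ i : Fin 2, ![t⁻¹, -t⁻¹] i * f (![x + t • v, x] i)
      = t⁻¹ * f (x + t • v) - t⁻¹ * f x := by
    rw [Fin.sum_univ_two]
    simp only [Matrix.cons_val_zero, Matrix.cons_val_one, Matrix.head_cons]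
    ring
  rw [hsum, Dz_eq hf]
  -- |f'(x)v - t⁻¹(f(x+tv) - f x)| = t⁻¹ |f(x+tv) - f x - f'(x)(tv)|
  have hHd : ∀ a b : Ed d, ‖fderiv ℝ f a - fderiv ℝ f b‖ ≤ 1 * dist a b ^ α := by
    intro a b
    rw [one_mul]
    calc ‖fderiv ℝ f a - fderiv ℝ f b‖ ≤ c1aNorm α f * dist a b ^ α := fderiv_sub_le hα hf a b
      _ ≤ 1 * dist a b ^ α :=
          mul_le_mul_of_nonneg_right hf1 (Real.rpow_nonneg dist_nonneg α)
      _ = dist a b ^ α := one_mul _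
  have key := mvt hα hf zero_le_one hHd x (x + t • v)
  rw [add_sub_cancel_left] at key
  have hfx : fderiv ℝ f x (t • v) = t * fderiv ℝ f x v := by
    rw [(fderiv ℝ f x).map_smul]; simp
  have heq : fderiv ℝ f x v - (t⁻¹ * f (x + t • v) - t⁻¹ * f x)
      = -(t⁻¹ * (f (x + t • v) - f x - fderiv ℝ f x (t • v))) := by
    rw [hfx]
    field_simp
    ring
  rw [heq, abs_neg, abs_mul, abs_of_pos (inv_pos.2 htpos)]
  have hnorm : ‖t • v‖ = t * ‖v‖ := by
    rw [norm_smul, Real.norm_eq_abs, abs_of_pos htpos]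
  have hb : |f (x + t • v) - f x - fderiv ℝ f x (t • v)| ≤ (t * ‖v‖) ^ α * (t * ‖v‖) := by
    rw [← hnorm]
    simpa using key
  calc t⁻¹ * |f (x + t • v) - f x - fderiv ℝ f x (t • v)|
      ≤ t⁻¹ * ((t * ‖v‖) ^ α * (t * ‖v‖)) :=
        mul_le_mul_of_nonneg_left hb (inv_pos.2 htpos).le
    _ = (t * ‖v‖) ^ α * ‖v‖ := by field_simp
    _ ≤ X ^ α * ‖v‖ := by
        apply mul_le_mul_of_nonneg_right _ (norm_nonneg v)
        apply Real.rpow_le_rpow (by positivity) _ hα.le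
        rw [ht]
        calc (‖v‖ + 1)⁻¹ * X * ‖v‖ = (‖v‖ / (‖v‖ + 1)) * X := by ring
          _ ≤ 1 * X := by
              apply mul_le_mul_of_nonneg_right _ hXpos.le
              rw [div_le_one hv1]; linarith
          _ = X := one_mul _
    _ = (ε / (‖v‖ + 1)) * ‖v‖ := by
        rw [hX, Real.rpow_inv_rpow (by positivity) (ne_of_gt hα)]
    _ ≤ ε := by
        rw [div_mul_eq_mul_div, div_le_iff₀ hv1]
        nlinarith [norm_nonneg v, hε.le]

lemma dualNorm_Dz_sub_le (hα : 0 < α) (x y v : Ed d) :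
    dualNorm α (fun f => Dz d α x v f - Dz d α y v f) ≤ dist x y ^ α * ‖v‖ := by
  apply dualNorm_le (mul_nonneg (Real.rpow_nonneg dist_nonneg α) (norm_nonneg v))
  intro f hf hf1
  rw [Dz_eq hf, Dz_eq hf]
  have : fderiv ℝ f x v - fderiv ℝ f y v = (fderiv ℝ f x - fderiv ℝ f y) v := by
    rw [ContinuousLinearMap.sub_apply]
  rw [this]
  calc |(fderiv ℝ f x - fderiv ℝ f y) v| ≤ ‖fderiv ℝ f x - fderiv ℝ f y‖ * ‖v‖ :=
        (fderiv ℝ f x - fderiv ℝ f y).le_opNorm v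
    _ ≤ (c1aNorm α f * dist x y ^ α) * ‖v‖ :=
        mul_le_mul_of_nonneg_right (fderiv_sub_le hα hf x y) (norm_nonneg v)
    _ ≤ (1 * dist x y ^ α) * ‖v‖ := by
        apply mul_le_mul_of_nonneg_right _ (norm_nonneg v)
        exact mul_le_mul_of_nonneg_right hf1 (Real.rpow_nonneg dist_nonneg α)
    _ = dist x y ^ α * ‖v‖ := by ring

lemma dualNorm_taylor_le (hα : 0 < α) (x h : Ed d) :
    dualNorm α (fun f => diracW (x + h) f - diracW x f - Dz d α x h f) ≤ ‖h‖ ^ α * ‖h‖ := by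
  apply dualNorm_le (mul_nonneg (Real.rpow_nonneg (norm_nonneg h) α) (norm_nonneg h))
  intro f hf hf1
  have hHd : ∀ a b : Ed d, ‖fderiv ℝ f a - fderiv ℝ f b‖ ≤ 1 * dist a b ^ α := by
    intro a b
    rw [one_mul]
    calc ‖fderiv ℝ f a - fderiv ℝ f b‖ ≤ c1aNorm α f * dist a b ^ α := fderiv_sub_le hα hf a b
      _ ≤ 1 * dist a b ^ α :=
          mul_le_mul_of_nonneg_right hf1 (Real.rpow_nonneg dist_nonneg α)
      _ = dist a b ^ α := one_mul _
  have key := mvt hα hf zero_le_one hHd x (x + h)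
  rw [add_sub_cancel_left, one_mul] at key
  show |f (x + h) - f x - fderiv ℝ (Pc d α f) x h| ≤ _
  rw [Pc_eq hf]
  exact key

end Aux4
section Main
variable {d : ℕ} {α : ℝ}

lemma bddOnZ_mono (hα : 0 < α) {φ : W d →ₗ[ℝ] ℝ} (hφ : BddOnZ α φ) :
    ∃ M : ℝ, 0 ≤ M ∧ ∀ z : W d, InZ α z → |φ z| ≤ M * dualNorm α z := by
  obtain ⟨M, hM⟩ := hφ
  refine ⟨max M 0, le_max_right _ _, fun z hz => ?_⟩
  exact (hM z hz).trans
    (mul_le_mul_of_nonneg_right (le_max_left _ _) (dualNorm_nonneg hα hz.1))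

lemma part1 (hα : 0 < α) (φ₁ φ₂ : W d →ₗ[ℝ] ℝ) (h₁ : BddOnZ α φ₁) (h₂ : BddOnZ α φ₂)
    (hd : ∀ x : Ed d, φ₁ (diracW x) = φ₂ (diracW x)) (z : W d) (hz : InZ α z) :
    φ₁ z = φ₂ z := by
  obtain ⟨M₁, hM₁0, hM₁⟩ := bddOnZ_mono hα h₁
  obtain ⟨M₂, hM₂0, hM₂⟩ := bddOnZ_mono hα h₂
  have key : ∀ ε > (0:ℝ), |φ₁ z - φ₂ z| ≤ (M₁ + M₂) * ε := by
    intro ε hε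
    obtain ⟨n, c, g, hap⟩ := hz.2 ε hε
    set s : W d := Sfin c g with hs_def
    have hs : φ₁ s = φ₂ s := by
      have hrepr : s = ∑ i, c i • diracW (g i) := by
        funext f
        rw [Finset.sum_apply]
        exact Finset.sum_congr rfl fun i _ => rfl
      rw [hrepr, map_sum, map_sum]
      exact Finset.sum_congr rfl fun i _ => by rw [LinearMap.map_smul, LinearMap.map_smul, hd]
    have hzs : InZ α (z - s) := inZ_sub hα hz (inZ_sfin hα c g)
    have hdn : dualNorm α (z - s) ≤ ε := hap
    have e1 : |φ₁ (z - s)| ≤ M₁ * ε :=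
      (hM₁ _ hzs).trans (mul_le_mul_of_nonneg_left hdn hM₁0)
    have e2 : |φ₂ (z - s)| ≤ M₂ * ε :=
      (hM₂ _ hzs).trans (mul_le_mul_of_nonneg_left hdn hM₂0)
    have hdiff : φ₁ z - φ₂ z = φ₁ (z - s) - φ₂ (z - s) := by
      rw [map_sub, map_sub, hs]; ring
    calc |φ₁ z - φ₂ z| = |φ₁ (z - s) - φ₂ (z - s)| := by rw [hdiff]
      _ ≤ |φ₁ (z - s)| + |φ₂ (z - s)| := abs_sub _ _
      _ ≤ M₁ * ε + M₂ * ε := add_le_add e1 e2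
      _ = (M₁ + M₂) * ε := by ring
  have habs : |φ₁ z - φ₂ z| ≤ 0 := by
    apply le_of_forall_pos_le_add
    intro ε hε
    have h1 := key (ε / (M₁ + M₂ + 1)) (by positivity)
    have h2 : (M₁ + M₂) * (ε / (M₁ + M₂ + 1)) ≤ ε := by
      rw [mul_div_assoc', div_le_iff₀ (by positivity)]
      nlinarith
    linarith
  have := abs_nonpos_iff.mp habs
  linarith [sub_eq_zero.mp this]

lemma part2 (hα : 0 < α) (φ : W d →ₗ[ℝ] ℝ) (hφ : BddOnZ α φ) :
    MemC1a α (fun x => φ (diracW x)) := by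
  obtain ⟨M, hM0, hM⟩ := bddOnZ_mono hα hφ
  set g : Ed d → ℝ := fun x => φ (diracW x) with hg_def
  -- the candidate derivative
  have hDadd : ∀ (x v w : Ed d), Dz d α x (v + w) = Dz d α x v + Dz d α x w := by
    intro x v w
    funext f
    show fderiv ℝ (Pc d α f) x (v + w) = _
    rw [map_add]
    rfl
  have hDsmul : ∀ (x : Ed d) (c : ℝ) (v : Ed d), Dz d α x (c • v) = c • Dz d α x v := by
    intro x c v
    funext f
    show fderiv ℝ (Pc d α f) x (c • v) = _
    rw [(fderiv ℝ (Pc d α f) x).map_smul]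
    rfl
  set L : Ed d → (Ed d →L[ℝ] ℝ) := fun x =>
    LinearMap.toContinuousLinearMap
      { toFun := fun v => φ (Dz d α x v)
        map_add' := fun v w => by
          show φ (Dz d α x (v + w)) = φ (Dz d α x v) + φ (Dz d α x w)
          rw [hDadd, map_add]
        map_smul' := fun c v => by
          show φ (Dz d α x (c • v)) = c • φ (Dz d α x v)
          rw [hDsmul, LinearMap.map_smul] } with hL_def
  have hLa : ∀ x v, L x v = φ (Dz d α x v) := fun x v => rfl
  have hL_bound : ∀ x, ‖L x‖ ≤ M := by
    intro x
    apply ContinuousLinearMap.opNorm_le_bound _ hM0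
    intro v
    rw [hLa]
    calc |φ (Dz d α x v)| ≤ M * dualNorm α (Dz d α x v) := hM _ (inZ_Dz hα x v)
      _ ≤ M * ‖v‖ := mul_le_mul_of_nonneg_left (dualNorm_Dz_le hα x v) hM0
  have hL_holder : ∀ x y, ‖L x - L y‖ ≤ M * dist x y ^ α := by
    intro x y
    apply ContinuousLinearMap.opNorm_le_bound _
      (mul_nonneg hM0 (Real.rpow_nonneg dist_nonneg α))
    intro v
    have hv : (L x - L y) v = φ (Dz d α x v - Dz d α y v) := by
      rw [ContinuousLinearMap.sub_apply, hLa, hLa, map_sub]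
    rw [hv]
    have hin : InZ α (Dz d α x v - Dz d α y v) := inZ_sub hα (inZ_Dz hα x v) (inZ_Dz hα y v)
    have hdn : dualNorm α (Dz d α x v - Dz d α y v) ≤ dist x y ^ α * ‖v‖ :=
      dualNorm_Dz_sub_le hα x y v
    calc |φ (Dz d α x v - Dz d α y v)| ≤ M * dualNorm α (Dz d α x v - Dz d α y v) := hM _ hin
      _ ≤ M * (dist x y ^ α * ‖v‖) := mul_le_mul_of_nonneg_left hdn hM0
      _ = M * dist x y ^ α * ‖v‖ := by ring
  have htaylor : ∀ x h : Ed d, |g (x + h) - g x - L x h| ≤ M * (‖h‖ ^ α * ‖h‖) := by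
    intro x h
    have he : g (x + h) - g x - L x h = φ (diracW (x + h) - diracW x - Dz d α x h) := by
      rw [map_sub, map_sub, hLa]
    rw [he]
    have hin : InZ α (diracW (x + h) - diracW x - Dz d α x h) :=
      inZ_sub hα (inZ_sub hα (inZ_dirac hα (x + h)) (inZ_dirac hα x)) (inZ_Dz hα x h)
    have hdn : dualNorm α (diracW (x + h) - diracW x - Dz d α x h) ≤ ‖h‖ ^ α * ‖h‖ :=
      dualNorm_taylor_le hα x h
    exact (hM _ hin).trans (mul_le_mul_of_nonneg_left hdn hM0)
  have hderiv : ∀ x, HasFDerivAt g (L x) x := by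
    intro x
    rw [hasFDerivAt_iff_isLittleO_nhds_zero, Asymptotics.isLittleO_iff]
    intro c hc
    rw [Metric.eventually_nhds_iff]
    refine ⟨(c / (M + 1)) ^ α⁻¹, Real.rpow_pos_of_pos (by positivity) _, fun h hd' => ?_⟩
    have hh : ‖h‖ ≤ (c / (M + 1)) ^ α⁻¹ := by
      rw [dist_zero_right] at hd'
      exact hd'.le
    have h1 : ‖h‖ ^ α ≤ c / (M + 1) := by
      calc ‖h‖ ^ α ≤ ((c / (M + 1)) ^ α⁻¹) ^ α :=
            Real.rpow_le_rpow (norm_nonneg h) hh hα.le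
        _ = c / (M + 1) := Real.rpow_inv_rpow (by positivity) (ne_of_gt hα)
    have h2 : M * ‖h‖ ^ α ≤ c := by
      calc M * ‖h‖ ^ α ≤ M * (c / (M + 1)) := mul_le_mul_of_nonneg_left h1 hM0
        _ ≤ c := by rw [mul_div_assoc', div_le_iff₀ (by positivity)]; nlinarith
    calc ‖g (x + h) - g x - L x h‖ = |g (x + h) - g x - L x h| := Real.norm_eq_abs _
      _ ≤ M * (‖h‖ ^ α * ‖h‖) := htaylor x h
      _ = (M * ‖h‖ ^ α) * ‖h‖ := by ring
      _ ≤ c * ‖h‖ := mul_le_mul_of_nonneg_right h2 (norm_nonneg h)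
  have hg_diff : Differentiable ℝ g := fun x => (hderiv x).differentiableAt
  have hgfd : fderiv ℝ g = L := funext fun x => (hderiv x).fderiv
  have hL_hold : HolderWith M.toNNReal α.toNNReal L := by
    apply holderWith_of_dist
    intro x y
    rw [dist_eq_norm, Real.coe_toNNReal _ hM0, Real.coe_toNNReal _ hα.le]
    exact hL_holder x y
  refine ⟨?_, ⟨M, ?_⟩, ⟨M, ?_⟩, M.toNNReal, ?_⟩
  · rw [contDiff_one_iff_fderiv]
    refine ⟨hg_diff, ?_⟩
    rw [hgfd]
    exact hL_hold.continuous (by simpa using Real.toNNReal_pos.mpr hα)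
  · rintro r ⟨x, rfl⟩
    show |g x| ≤ M
    calc |g x| = |φ (diracW x)| := rfl
      _ ≤ M * dualNorm α (diracW x) := hM _ (inZ_dirac hα x)
      _ ≤ M * 1 := mul_le_mul_of_nonneg_left (dualNorm_dirac_le hα x) hM0
      _ = M := mul_one M
  · rintro r ⟨x, rfl⟩
    show ‖fderiv ℝ g x‖ ≤ M
    rw [hgfd]
    exact hL_bound x
  · rw [hgfd]
    exact hL_hold

lemma part3 (hα : 0 < α) (y : Ed d → ℝ) (hy : MemC1a α y) :
    ∃ φ : W d →ₗ[ℝ] ℝ, BddOnZ α φ ∧ (∀ x : Ed d, φ (diracW x) = y x) ∧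
      zDualNorm α φ ≤ c1aNorm α y := by
  refine ⟨{ toFun := fun z => z y
            map_add' := fun a b => rfl
            map_smul' := fun c a => rfl }, ?_, fun x => rfl, ?_⟩
  · refine ⟨c1aNorm α y, fun z hz => ?_⟩
    have := abs_le_mul_dualNorm hα hz.1 hy
    calc |z y| ≤ dualNorm α z * c1aNorm α y := this
      _ = c1aNorm α y * dualNorm α z := mul_comm _ _
  · apply Real.sSup_le _ (c1aNorm_nonneg y)
    rintro r ⟨z, hz, hz1, rfl⟩
    show |z y| ≤ c1aNorm α y
    calc |z y| ≤ dualNorm α z * c1aNorm α y := abs_le_mul_dualNorm hα hz.1 hy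
      _ ≤ 1 * c1aNorm α y := mul_le_mul_of_nonneg_right hz1 (c1aNorm_nonneg y)
      _ = c1aNorm α y := one_mul _

end Main


/-- T : Z* → C^{1+α}(ℝ^d), (Tφ)(x) = φ(δ_x), is a linear isomorphism of Banach spaces:
it is injective (functionals agreeing on Diracs agree on Z), maps Z* into C^{1+α}(ℝ^d),
and is surjective with ‖T⁻¹y‖_{Z*} ≤ ‖y‖_{C^{1+α}} for all y ∈ C^{1+α}(ℝ^d). -/
theorem Zdual_isomorphic_C1a (d : ℕ) (α : ℝ) (hα : 0 < α) (hα1 : α ≤ 1) :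
    (∀ φ₁ φ₂ : W d →ₗ[ℝ] ℝ, BddOnZ α φ₁ → BddOnZ α φ₂ →
      (∀ x : Ed d, φ₁ (diracW x) = φ₂ (diracW x)) →
      ∀ z : W d, InZ α z → φ₁ z = φ₂ z) ∧
    (∀ φ : W d →ₗ[ℝ] ℝ, BddOnZ α φ → MemC1a α (fun x => φ (diracW x))) ∧
    (∀ y : Ed d → ℝ, MemC1a α y →
      ∃ φ : W d →ₗ[ℝ] ℝ, BddOnZ α φ ∧ (∀ x : Ed d, φ (diracW x) = y x) ∧
        zDualNorm α φ ≤ c1aNorm α y) :=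
  ⟨fun φ₁ φ₂ h₁ h₂ hd z hz => part1 hα φ₁ φ₂ h₁ h₂ hd z hz,
   fun φ hφ => part2 hα φ hφ,
   fun y hy => part3 hα y hy⟩
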